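/- Let φ(z) = (−z² + 2z + 1)/(z² + 2z − 1), extended to ℙ¹(ℚ) = ℚ ∪ {∞} (the denominator has no rational roots; φ(∞) = −1). Then the set of rational preperiodic points of φ is exactly {0, ∞, −1, 1}, with orbit structure: 1 is a fixed point, φ(−1) = 1, φ(0) = −1, and φ(∞) = −1. -/

import Mathlib

/-!
The rational preperiodic points of `φ(z) = (−z² + 2z + 1)/(z² + 2z − 1)` are
exactly `{0, ∞, −1, 1}` with `1` fixed, `φ(−1) = 1`, `φ(0) = −1`,
`φ(∞) = −1`.

We model ℙ¹(ℚ) as `Option ℚ`, with `none` playing the role of ∞;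
the denominator has no rational roots and `φ(∞) = −1`.
-/

/-- The map `φ(z) = (−z² + 2z + 1)/(z² + 2z − 1)` on `ℙ¹(ℚ)`, with
`φ(∞) = −1`. -/
def phi13 : Option ℚ → Option ℚ
  | none => some (-1)
  | some x =>
      if x ^ 2 + 2 * x - 1 = 0 then none
      else some ((-x ^ 2 + 2 * x + 1) / (x ^ 2 + 2 * x - 1))

/-- A point is preperiodic for a self-map `f` if two distinct iterates of `f`
agree on it, i.e. its forward orbit is finite. -/
def IsPreperiodicPt {X : Type*} (f : X → X) (α : X) : Prop :=
  ∃ i j : ℕ, i < j ∧ f^[i] α = f^[j] α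


def Hgt (x : ℚ) : ℤ := max |x.num| (x.den : ℤ)

noncomputable def frat (x : ℚ) : ℚ := (-x^2 + 2*x + 1)/(x^2 + 2*x - 1)

lemma denom_ne (x : ℚ) : x^2 + 2*x - 1 ≠ 0 := by
  intro h
  have h2 : ((x:ℝ) + 1)^2 = 2 := by
    have : (x:ℝ)^2 + 2*x - 1 = 0 := by exact_mod_cast congrArg (Rat.cast (K := ℝ)) h
    nlinarith
  have hirr : Irrational (Real.sqrt 2) := irrational_sqrt_two
  have : Real.sqrt 2 = ((|x + 1| : ℚ) : ℝ) := by
    rw [← h2, Real.sqrt_sq_eq_abs]; push_cast; ring_nf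
  exact (Rat.not_irrational _) (this ▸ hirr)

lemma Hgt_pos (x : ℚ) : 1 ≤ Hgt x := le_max_of_le_right (by exact_mod_cast x.pos)

lemma frat_eq (x : ℚ) :
    frat x = ((-x.num^2 + 2*x.num*x.den + (x.den:ℤ)^2 : ℤ) : ℚ)
      / ((x.num^2 + 2*x.num*x.den - (x.den:ℤ)^2 : ℤ) : ℚ) := by
  have hb : ((x.den : ℚ)) ≠ 0 := by exact_mod_cast x.den_nz
  have hx : (x.num : ℚ) = x * x.den := by
    rw [← div_eq_iff hb]; exact Rat.num_div_den x
  have hD : ((x.num^2 + 2*x.num*x.den - (x.den:ℤ)^2 : ℤ) : ℚ)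
      = (x^2 + 2*x - 1) * (x.den:ℚ)^2 := by push_cast [hx]; ring
  have hN : ((-x.num^2 + 2*x.num*x.den + (x.den:ℤ)^2 : ℤ) : ℚ)
      = (-x^2 + 2*x + 1) * (x.den:ℚ)^2 := by push_cast [hx]; ring
  rw [frat, hD, hN, mul_div_mul_right _ _ (by positivity)]

lemma fratD_ne (x : ℚ) : (x.num^2 + 2*x.num*x.den - (x.den:ℤ)^2 : ℤ) ≠ 0 := by
  intro h
  apply denom_ne x
  have hb : ((x.den : ℚ)) ≠ 0 := by exact_mod_cast x.den_nz
  have hx : (x.num : ℚ) = x * x.den := by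
    rw [← div_eq_iff hb]; exact Rat.num_div_den x
  have : ((x.num^2 + 2*x.num*x.den - (x.den:ℤ)^2 : ℤ) : ℚ) = 0 := by exact_mod_cast h
  rw [show ((x.num^2 + 2*x.num*x.den - (x.den:ℤ)^2 : ℤ) : ℚ)
      = (x^2 + 2*x - 1) * (x.den:ℚ)^2 by push_cast [hx]; ring] at this
  rcases mul_eq_zero.mp this with h' | h'
  · exact h'
  · exact absurd h' (by positivity)

lemma not_four_dvd (a b : ℤ) (hcop : IsCoprime a b) :
    ¬ (4:ℤ) ∣ (-a^2 + 2*a*b + b^2) := by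
  intro h4
  rcases Int.even_or_odd a with ha | ha <;> rcases Int.even_or_odd b with hb | hb
  · -- both even: contradicts coprimality
    obtain ⟨m, hm⟩ := ha; obtain ⟨n, hn⟩ := hb
    have : IsUnit (2:ℤ) := hcop.isUnit_of_dvd' ⟨m, by omega⟩ ⟨n, by omega⟩
    rw [Int.isUnit_iff] at this; omega
  · -- a even, b odd : N odd
    have h2 : (2:ℤ) ∣ (-a^2 + 2*a*b + b^2) := dvd_trans (by norm_num) h4
    obtain ⟨m, hm⟩ := ha; obtain ⟨n, hn⟩ := hb
    obtain ⟨t, ht⟩ := h2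
    rw [hm, hn] at ht
    have h' : 2*t = 2*(-2*m^2 + 4*m*n + 2*m + 2*n^2 + 2*n) + 1 := by linear_combination -ht
    omega
  · have h2 : (2:ℤ) ∣ (-a^2 + 2*a*b + b^2) := dvd_trans (by norm_num) h4
    obtain ⟨m, hm⟩ := ha; obtain ⟨n, hn⟩ := hb
    obtain ⟨t, ht⟩ := h2
    rw [hm, hn] at ht
    have h' : 2*t = 2*(-2*m^2 - 2*m + 4*m*n + 2*n + 2*n^2) - 1 := by linear_combination -ht
    omega
  · -- both odd: N ≡ 2 mod 4
    obtain ⟨m, hm⟩ := ha; obtain ⟨n, hn⟩ := hb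
    obtain ⟨t, ht⟩ := h4
    rw [hm, hn] at ht
    have h' : 4*t = 4*(-m^2 + 2*m*n + n^2 + 2*n) + 2 := by linear_combination -ht
    omega

set_option maxHeartbeats 2000000 in
lemma key_growth (x : ℚ) (h3 : 3 ≤ Hgt x) : Hgt x < Hgt (frat x) := by
  set a := x.num with ha
  set b := (x.den : ℤ) with hb
  have hb1 : 1 ≤ b := by
    have : 0 < x.den := x.pos
    rw [hb]; omega
  have hcop : IsCoprime a b := by
    rw [Int.isCoprime_iff_gcd_eq_one]; exact x.reduced
  set N : ℤ := -a ^ 2 + 2 * a * b + b ^ 2 with hN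
  set D : ℤ := a ^ 2 + 2 * a * b - b ^ 2 with hD
  have hD0 : D ≠ 0 := fratD_ne x
  have hDq : ((D : ℚ)) ≠ 0 := by exact_mod_cast hD0
  set q := frat x with hq
  have hq' : (q.num : ℚ) / (q.den : ℚ) = (N : ℚ) / (D : ℚ) := by
    rw [Rat.num_div_den]; exact frat_eq x
  have hqden : ((q.den : ℚ)) ≠ 0 := by exact_mod_cast q.den_nz
  have hcross : q.num * D = N * q.den := by
    have := (div_eq_div_iff hqden hDq).mp hq'
    exact_mod_cast this
  have hqcop : IsCoprime q.num (q.den : ℤ) := by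
    rw [Int.isCoprime_iff_gcd_eq_one]; exact q.reduced
  have hdenD : (q.den : ℤ) ∣ D := by
    refine hqcop.symm.dvd_of_dvd_mul_left ?_
    exact ⟨N, by linarith [hcross]⟩
  obtain ⟨k, hk⟩ := hdenD
  have hqden0 : ((q.den : ℤ)) ≠ 0 := by exact_mod_cast q.den_nz
  have hdenpos : 1 ≤ ((q.den) : ℤ) := by
    have : 0 < q.den := q.pos
    omega
  have hNk : N = q.num * k := by
    have h1 : q.num * ((q.den : ℤ) * k) = N * q.den := hk ▸ hcross
    have h2 : (q.num * k) * (q.den : ℤ) = N * (q.den : ℤ) := by ring_nf; ring_nf at h1; linarith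
    exact (mul_right_cancel₀ hqden0 h2).symm
  have hk0 : k ≠ 0 := by rintro rfl; simp at hk; exact hD0 hk
  have hkN : k ∣ N := ⟨q.num, by linarith [hNk]⟩
  have hkD : k ∣ D := ⟨q.den, by linarith [hk]⟩
  have hka : k ∣ 4 * a ^ 3 := by
    have : 4 * a ^ 3 = (b - 2 * a) * N + (2 * a + b) * D := by rw [hN, hD]; ring
    rw [this]; exact dvd_add (Dvd.dvd.mul_left hkN _) (Dvd.dvd.mul_left hkD _)
  have hkb : k ∣ 4 * b ^ 3 := by
    have : 4 * b ^ 3 = (a + 2 * b) * N + (a - 2 * b) * D := by rw [hN, hD]; ring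
    rw [this]; exact dvd_add (Dvd.dvd.mul_left hkN _) (Dvd.dvd.mul_left hkD _)
  have hk4 : k ∣ 4 := by
    obtain ⟨u, v, huv⟩ := (hcop.pow (m := 3) (n := 3))
    have : (4 : ℤ) = u * (4 * a ^ 3) + v * (4 * b ^ 3) := by linear_combination 4 * huv.symm
    rw [this]; exact dvd_add (Dvd.dvd.mul_left hka _) (Dvd.dvd.mul_left hkb _)
  have h4N : ¬ (4 : ℤ) ∣ N := not_four_dvd a b hcop
  have hk2 : k = 1 ∨ k = -1 ∨ k = 2 ∨ k = -2 := by
    obtain ⟨t, ht⟩ := id hk4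
    have habs4 : |k| ≤ 4 := Int.le_of_dvd (by norm_num) ((abs_dvd k 4).mpr hk4)
    have hbd1 : -4 ≤ k := neg_le_of_abs_le habs4
    have hbd2 : k ≤ 4 := le_of_abs_le habs4
    interval_cases k
    · exact absurd ⟨-q.num, by linarith [hNk]⟩ h4N
    · omega
    · right; right; right; rfl
    · right; left; rfl
    · exact absurd rfl hk0
    · left; rfl
    · right; right; left; rfl
    · omega
    · exact absurd ⟨q.num, by linarith [hNk]⟩ h4N
  have hkabs : |k| ≤ 2 := by rcases hk2 with rfl | rfl | rfl | rfl <;> norm_num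
  set M2 : ℤ := max |q.num| ((q.den : ℤ)) with hM2
  have hM : 1 ≤ M2 := le_max_of_le_right hdenpos
  have hnum : |q.num| ≤ M2 := le_max_left _ _
  have hden : ((q.den : ℤ)) ≤ M2 := le_max_right _ _
  have habs_a : 0 ≤ |a| := abs_nonneg a
  have e2 : |N| + |D| ≤ 4 * M2 := by
    have n1 : |N| = |q.num| * |k| := by rw [hNk, abs_mul]
    have n2 : |D| = (q.den : ℤ) * |k| := by
      rw [hk, abs_mul, abs_of_nonneg (by linarith : (0:ℤ) ≤ (q.den : ℤ))]
    have hN2 : |N| ≤ 2 * M2 := by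
      rw [n1]
      calc |q.num| * |k| ≤ M2 * 2 :=
            mul_le_mul hnum hkabs (abs_nonneg k) (by linarith)
        _ = 2 * M2 := by ring
    have hD2 : |D| ≤ 2 * M2 := by
      rw [n2]
      calc (q.den : ℤ) * |k| ≤ M2 * 2 :=
            mul_le_mul hden hkabs (abs_nonneg k) (by linarith)
        _ = 2 * M2 := by ring
    linarith
  have key1 : |a| * b ≤ M2 := by
    have h1 : |N + D| ≤ |N| + |D| := abs_add_le _ _
    have h2 : N + D = 4 * (a * b) := by rw [hN, hD]; ring
    have h3' : |N + D| = 4 * (|a| * b) := by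
      rw [h2, abs_mul, abs_mul, abs_of_nonneg (by linarith : (0:ℤ) ≤ b)]
      norm_num
    linarith
  have key2 : |a ^ 2 - b ^ 2| ≤ 2 * M2 := by
    have h1 : |D - N| ≤ |D| + |N| := abs_sub _ _
    have h2 : D - N = 2 * (a ^ 2 - b ^ 2) := by rw [hN, hD]; ring
    have h3' : |D - N| = 2 * |a ^ 2 - b ^ 2| := by rw [h2, abs_mul]; norm_num
    linarith
  have hgoal : max |a| b < M2 := by
    rcases le_or_gt 2 |a| with ha2 | ha2
    · rcases le_or_gt 2 b with hb2 | hb2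
      · have h1 : 2 * max |a| b ≤ |a| * b := by
          rcases max_cases |a| b with ⟨hm, hmge⟩ | ⟨hm, hmge⟩ <;> rw [hm] <;> nlinarith
        have h2 : 1 ≤ max |a| b := le_max_of_le_right hb1
        linarith
      · have hb1' : b = 1 := by omega
        have hmax : max |a| b = |a| := max_eq_left (by omega)
        have ha3 : 3 ≤ |a| := by
          have : Hgt x = max |a| b := rfl
          omega
        have hup : a ^ 2 - 1 ≤ |a ^ 2 - b ^ 2| := by
          rw [hb1']
          have h0 : a ^ 2 - 1 ^ 2 ≤ |a ^ 2 - 1 ^ 2| := le_abs_self _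
          linarith
        have hsq : 3 * |a| ≤ a ^ 2 := by nlinarith [sq_abs a]
        rw [hmax]
        linarith
    · have hb3 : 3 ≤ b := by
        have : Hgt x = max |a| b := rfl
        rcases max_cases |a| b with ⟨hm, hmge⟩ | ⟨hm, hmge⟩ <;> omega
      have hmax : max |a| b = b := max_eq_right (by omega)
      have hup : b ^ 2 - 1 ≤ |a ^ 2 - b ^ 2| := by
        have h1 : b ^ 2 - a ^ 2 ≤ |a ^ 2 - b ^ 2| := by
          rw [abs_sub_comm]; exact le_abs_self _
        have h2 : a ^ 2 ≤ 1 := by nlinarith [sq_abs a]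
        linarith
      have hsq : 3 * b ≤ b ^ 2 := by nlinarith
      rw [hmax]
      linarith
  exact hgoal

lemma escape (x : ℚ) (h3 : 3 ≤ Hgt x) : ∀ n : ℕ, Hgt x + n ≤ Hgt (frat^[n] x) := by
  intro n
  induction n with
  | zero => simp
  | succ m ih =>
      have h3' : 3 ≤ Hgt (frat^[m] x) := by linarith [Nat.cast_nonneg (α := ℤ) m]
      have := key_growth (frat^[m] x) h3'
      rw [Function.iterate_succ_apply']
      push_cast
      linarith

lemma not_prep_of_big (x : ℚ) (h3 : 3 ≤ Hgt x) : ¬ IsPreperiodicPt frat x := by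
  rintro ⟨i, j, hij, hfix⟩
  have h3i : 3 ≤ Hgt (frat^[i] x) := by linarith [escape x h3 i, Nat.cast_nonneg (α := ℤ) i]
  have h2 := escape (frat^[i] x) h3i (j - i)
  rw [← Function.iterate_add_apply] at h2
  have hji : j - i + i = j := by omega
  rw [hji, ← hfix] at h2
  have : (1:ℤ) ≤ (j - i : ℕ) := by exact_mod_cast Nat.one_le_iff_ne_zero.mpr (by omega)
  linarith

lemma prep_step (x : ℚ) (h : IsPreperiodicPt frat x) : IsPreperiodicPt frat (frat x) := by
  obtain ⟨i, j, hij, hfix⟩ := h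
  exact ⟨i, j, hij, by
    rw [← Function.iterate_succ_apply, ← Function.iterate_succ_apply,
      Function.iterate_succ_apply', Function.iterate_succ_apply', hfix]⟩

lemma small_class (x : ℚ) (h : Hgt x ≤ 2) :
    x = 0 ∨ x = 1 ∨ x = -1 ∨ x = 2 ∨ x = -2 ∨ x = 1/2 ∨ x = -1/2 := by
  have hnum : |x.num| ≤ 2 := le_trans (le_max_left _ _) h
  have hden : (x.den : ℤ) ≤ 2 := le_trans (le_max_right _ _) h
  have hdpos : 0 < x.den := x.pos
  have hcop : x.num.natAbs.Coprime x.den := x.reduced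
  have hx : (x.num : ℚ) / (x.den : ℚ) = x := Rat.num_div_den x
  have hd : x.den = 1 ∨ x.den = 2 := by omega
  have hn : x.num = -2 ∨ x.num = -1 ∨ x.num = 0 ∨ x.num = 1 ∨ x.num = 2 := by
    rcases abs_le.mp hnum with ⟨h1, h2⟩; omega
  rcases hd with hd | hd <;> rcases hn with hn | hn | hn | hn | hn <;>
    rw [hd, hn] at hx <;> norm_num at hx <;> rw [hd, hn] at hcop <;>
      norm_num [Nat.Coprime] at hcop <;> norm_num <;> tauto

lemma Hgt_seven : 3 ≤ Hgt (7:ℚ) := by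
  have h1 : (7:ℚ) = ((7:ℤ):ℚ) / ((1:ℤ):ℚ) := by norm_num
  have hnum : (7:ℚ).num = 7 := by
    rw [h1]; exact Rat.num_div_eq_of_coprime (by norm_num) (by norm_num)
  have : (3:ℤ) ≤ |(7:ℚ).num| := by rw [hnum]; norm_num
  exact le_trans this (le_max_left _ _)

lemma Hgt_seventh : 3 ≤ Hgt (1/7:ℚ) := by
  have h1 : (1/7:ℚ) = ((1:ℤ):ℚ) / ((7:ℤ):ℚ) := by norm_num
  have hden : ((1/7:ℚ).den : ℤ) = 7 := by
    rw [h1]; exact Rat.den_div_eq_of_coprime (by norm_num) (by norm_num)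
  have : Hgt (1/7:ℚ) ≥ 7 := le_trans (by omega) (le_max_right _ _)
  omega

lemma frat_two : frat (2:ℚ) = 1/7 := by norm_num [frat]
lemma frat_negtwo : frat (-2:ℚ) = 7 := by norm_num [frat]
lemma frat_half : frat (1/2:ℚ) = 7 := by norm_num [frat]
lemma frat_neghalf : frat (-1/2:ℚ) = 1/7 := by norm_num [frat]

lemma not_prep_all (x : ℚ) (h0 : x ≠ 0) (h1 : x ≠ 1) (hm1 : x ≠ -1) :
    ¬ IsPreperiodicPt frat x := by
  intro hp
  rcases le_or_gt 3 (Hgt x) with h3 | h3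
  · exact not_prep_of_big x h3 hp
  · have hsm := small_class x (by omega)
    have hp' := prep_step x hp
    rcases hsm with rfl | rfl | rfl | rfl | rfl | rfl | rfl
    · exact h0 rfl
    · exact h1 rfl
    · exact hm1 rfl
    · exact not_prep_of_big _ (frat_two ▸ Hgt_seventh) hp'
    · exact not_prep_of_big _ (frat_negtwo ▸ Hgt_seven) hp'
    · exact not_prep_of_big _ (frat_half ▸ Hgt_seven) hp'
    · exact not_prep_of_big _ (frat_neghalf ▸ Hgt_seventh) hp'

lemma phi13_some (x : ℚ) : phi13 (some x) = some (frat x) := by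
  show (if x ^ 2 + 2 * x - 1 = 0 then none else
      some ((-x ^ 2 + 2 * x + 1) / (x ^ 2 + 2 * x - 1))) = some (frat x)
  rw [if_neg (denom_ne x)]
  rfl

lemma phi13_iter (n : ℕ) (x : ℚ) : phi13^[n] (some x) = some (frat^[n] x) := by
  induction n with
  | zero => rfl
  | succ m ih =>
      rw [Function.iterate_succ_apply', Function.iterate_succ_apply', ih, phi13_some]

/-- The set of rational preperiodic points of
`φ(z) = (−z² + 2z + 1)/(z² + 2z − 1)` is exactly `{0, ∞, −1, 1}`, with orbit
structure `1` fixed, `φ(−1) = 1`, `φ(0) = −1`, `φ(∞) = −1`. -/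
theorem phi13_preperiodic_points :
    {α : Option ℚ | IsPreperiodicPt phi13 α} =
        ({some 0, none, some (-1), some 1} : Set (Option ℚ)) ∧
      phi13 (some 1) = some 1 ∧ phi13 (some (-1)) = some 1 ∧
      phi13 (some 0) = some (-1) ∧ phi13 none = some (-1) := by
  have c0 : phi13 (some 0) = some (-1) := by norm_num [phi13]
  have c1 : phi13 (some (-1)) = some 1 := by norm_num [phi13]
  have c2 : phi13 (some 1) = some 1 := by norm_num [phi13]
  have cn : phi13 none = some (-1) := rfl
  refine ⟨?_, c2, c1, c0, cn⟩
  ext α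
  simp only [Set.mem_setOf_eq, Set.mem_insert_iff, Set.mem_singleton_iff]
  constructor
  · intro hp
    cases α with
    | none => tauto
    | some x =>
        by_contra hmem
        push_neg at hmem
        obtain ⟨hm0, -, hm1, hm2⟩ := hmem
        have hx0 : x ≠ 0 := fun h => hm0 (by rw [h])
        have hxm1 : x ≠ -1 := fun h => hm1 (by rw [h])
        have hx1 : x ≠ 1 := fun h => hm2 (by rw [h])
        obtain ⟨i, j, hij, hfix⟩ := hp
        rw [phi13_iter, phi13_iter] at hfix
        exact not_prep_all x hx0 hx1 hxm1 ⟨i, j, hij, Option.some_injective _ hfix⟩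
  · intro h
    have step2 : ∀ β : Option ℚ, phi13 β = some (-1) → IsPreperiodicPt phi13 β := by
      intro β hβ
      refine ⟨2, 3, by norm_num, ?_⟩
      rw [show (3:ℕ) = 1+1+1 from rfl, show (2:ℕ) = 1+1 from rfl]
      simp only [Function.iterate_add_apply, Function.iterate_one, hβ, c1, c2]
    rcases h with rfl | rfl | rfl | rfl
    · exact step2 _ c0
    · exact step2 _ cn
    · refine ⟨1, 2, by norm_num, ?_⟩
      rw [show (2:ℕ) = 1+1 from rfl]
      simp only [Function.iterate_add_apply, Function.iterate_one, c1, c2]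
    · exact ⟨0, 1, by norm_num, by simp only [Function.iterate_one, Function.iterate_zero_apply, c2]⟩
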